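/- Let A = (Σ, Q, δ) be a semi-automaton with n states, m letters of rank n-1, and n > m. Then every subset of Q of size n-1 is reachable from Q if and only if there is at least one letter of rank n-1 and the permutation group G generated by the permutational letters is such that every state of Q lies in the G-orbit of some state s_i, where for each rank-(n-1) letter a_i, s_i is the unique state not in δ(Q, a_i). -/

import Mathlib

open Finset

universe u v

variable {Q : Type u} {A : Type v}

/-- Extended transition function on words (lists of letters). -/
def dw (δ : Q → A → Q) (q : Q) (w : List A) : Q := w.foldl δ q

/-- A subset `S` of the state set is reachable if it is the image of the
full state set under some word. -/
def reach [Fintype Q] [DecidableEq Q] (δ : Q → A → Q) (S : Finset Q) : Prop :=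
  ∃ w : List A, Finset.univ.image (fun q => dw δ q w) = S

/-- Rank of a word: cardinality of the image of the state set under it. -/
def rkw [Fintype Q] [DecidableEq Q] (δ : Q → A → Q) (w : List A) : ℕ :=
  (Finset.univ.image (fun q => dw δ q w)).card

/-- Rank of a letter. -/
def rkl [Fintype Q] [DecidableEq Q] (δ : Q → A → Q) (a : A) : ℕ :=
  (Finset.univ.image (fun q => δ q a)).card

/-- A map is a cyclic permutation with a single orbit. -/
def isCyclicPerm (f : Q → Q) : Prop :=
  Function.Bijective f ∧ ∀ p q : Q, ∃ k : ℕ, f^[k] p = q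

/-- Two subsets of states are distinguishable in the power automaton:
some word maps exactly one of them to a singleton. -/
def distinguishable [DecidableEq Q] (δ : Q → A → Q) (S T : Finset Q) : Prop :=
  ∃ u : List A,
    Xor' ((S.image (fun q => dw δ q u)).card = 1)
         ((T.image (fun q => dw δ q u)).card = 1)

/-- The set of synchronizing words. -/
def Syn [Fintype Q] [DecidableEq Q] (δ : Q → A → Q) : Set (List A) :=
  {w | (Finset.univ.image (fun q => dw δ q w)).card = 1}

/-- The Nerode right-congruence of a language. -/
def nerode (L : Set (List A)) : Setoid (List A) where
  r u v := ∀ x : List A, u ++ x ∈ L ↔ v ++ x ∈ L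
  iseqv := ⟨fun _ _ => Iff.rfl, fun h x => (h x).symm, fun h1 h2 x => (h1 x).trans (h2 x)⟩

/-- State complexity of a language: number of Nerode classes. -/
noncomputable def sc (L : Set (List A)) : ℕ := Nat.card (Quotient (nerode L))

/-- Complete reachability. -/
def complReach [Fintype Q] [DecidableEq Q] (δ : Q → A → Q) : Prop :=
  ∀ S : Finset Q, S.Nonempty → ∃ w : List A, Finset.univ.image (fun q => dw δ q w) = S

/-- The permutation group generated by the permutational letters. -/
def permGroup [Fintype Q] [DecidableEq Q] (δ : Q → A → Q) : Subgroup (Equiv.Perm Q) :=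
  Subgroup.closure {π : Equiv.Perm Q | ∃ a : A, ∀ q : Q, π q = δ q a}

/- ===== auxiliary lemmas ===== -/

lemma dw_append (δ : Q → A → Q) (q : Q) (w₁ w₂ : List A) :
    dw δ q (w₁ ++ w₂) = dw δ (dw δ q w₁) w₂ :=
  List.foldl_append

lemma perm_image_univ [Fintype Q] [DecidableEq Q] (g : Equiv.Perm Q) :
    (univ : Finset Q).image g = univ :=
  Finset.image_univ_equiv g

lemma perm_image_sdiff [Fintype Q] [DecidableEq Q] (g : Equiv.Perm Q) (s : Q) :
    ((univ : Finset Q) \ {s}).image g = univ \ {g s} := by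
  rw [Finset.image_sdiff _ _ g.injective, perm_image_univ, Finset.image_singleton]

lemma realize_pow [Fintype Q] [DecidableEq Q] (δ : Q → A → Q) (x : Equiv.Perm Q)
    (w : List A) (hw : ∀ q, dw δ q w = x q) :
    ∀ k : ℕ, ∃ w' : List A, ∀ q, dw δ q w' = (x ^ k) q := by
  intro k
  induction k with
  | zero => exact ⟨[], fun q => rfl⟩
  | succ k ih =>
    obtain ⟨wk, hwk⟩ := ih
    refine ⟨w ++ wk, fun q => ?_⟩
    rw [dw_append, hw, hwk, pow_succ]
    rfl

lemma realize [Fintype Q] [DecidableEq Q] (δ : Q → A → Q) :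
    ∀ g ∈ permGroup δ, ∃ w : List A, ∀ q, dw δ q w = g q := by
  intro g hg
  induction hg using Subgroup.closure_induction with
  | mem π hπ =>
    obtain ⟨a, ha⟩ := hπ
    exact ⟨[a], fun q => (ha q).symm⟩
  | one => exact ⟨[], fun q => rfl⟩
  | mul x y hx hy ihx ihy =>
    obtain ⟨wx, hwx⟩ := ihx
    obtain ⟨wy, hwy⟩ := ihy
    refine ⟨wy ++ wx, fun q => ?_⟩
    rw [dw_append, hwy, hwx]
    rfl
  | inv x hx ihx =>
    obtain ⟨w, hw⟩ := ihx
    obtain ⟨w', hw'⟩ := realize_pow δ x w hw (orderOf x - 1)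
    refine ⟨w', fun q => ?_⟩
    rw [hw']
    have hord : (0:ℕ) < orderOf x := orderOf_pos x
    have : x ^ (orderOf x - 1) * x = 1 := by
      rw [← pow_succ, Nat.sub_add_cancel hord]
      exact pow_orderOf_eq_one x
    rw [eq_inv_of_mul_eq_one_left this]

lemma key_lemma [Fintype Q] [DecidableEq Q] [Fintype A] (δ : Q → A → Q) (n : ℕ)
    (hn : Fintype.card Q = n) :
    ∀ w : List A, ∀ q : Q,
      Finset.univ.image (fun p => dw δ p w) = Finset.univ \ {q} →
      ∃ (a : A) (s : Q), rkl δ a = n - 1 ∧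
        Finset.univ.image (fun p => δ p a) = Finset.univ \ {s} ∧
        ∃ g ∈ permGroup δ, g s = q := by
  intro w
  induction w using List.reverseRecOn with
  | nil =>
    intro q h
    exfalso
    have : (univ : Finset Q).image (fun p => dw δ p []) = univ := by
      simp [dw]
    rw [this] at h
    have hq : q ∈ (univ : Finset Q) \ {q} := h ▸ Finset.mem_univ q
    simp at hq
  | append_singleton w' b ih =>
    intro q h
    have him : (univ : Finset Q).image (fun p => dw δ p (w' ++ [b]))
        = ((univ : Finset Q).image (fun p => dw δ p w')).image (fun p => δ p b) := by
      rw [Finset.image_image]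
      apply Finset.image_congr
      intro p _
      simp only [Function.comp]
      rw [dw_append]
      rfl
    rw [him] at h
    set T := (univ : Finset Q).image (fun p => dw δ p w') with hT
    have hcard_sdiff : ∀ x : Q, ((univ : Finset Q) \ {x}).card = n - 1 := by
      intro x
      rw [Finset.card_sdiff_of_subset (by simp), Finset.card_univ, hn, Finset.card_singleton]
    by_cases hb : rkl δ b = n
    · -- permutational letter
      have hsurj : Function.Surjective (fun p => δ p b) := by
        have himg : (univ : Finset Q).image (fun p => δ p b) = univ := by
          apply Finset.eq_of_subset_of_card_le (Finset.subset_univ _)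
          rw [Finset.card_univ, hn]
          exact hb.ge
        intro y
        have : y ∈ (univ : Finset Q).image (fun p => δ p b) := by
          rw [himg]; exact Finset.mem_univ y
        obtain ⟨x, _, hx⟩ := Finset.mem_image.mp this
        exact ⟨x, hx⟩
      have hbij : Function.Bijective (fun p => δ p b) :=
        ⟨Finite.injective_iff_surjective.mpr hsurj, hsurj⟩
      set π : Equiv.Perm Q := Equiv.ofBijective _ hbij with hπ
      have hπa : ∀ p, π p = δ p b := fun p => rfl
      have hTπ : T.image π = univ \ {q} := by
        rw [← h]
        exact Finset.image_congr fun p _ => (hπa p)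
      have hT' : T = univ \ {π⁻¹ q} := by
        have := congrArg (fun s : Finset Q => s.image (π⁻¹ : Equiv.Perm Q)) hTπ
        rw [Finset.image_image] at this
        have hid : T.image (⇑(π⁻¹ : Equiv.Perm Q) ∘ ⇑π) = T := by
          have : ⇑(π⁻¹ : Equiv.Perm Q) ∘ ⇑π = id := by
            funext x; simp
          rw [this, Finset.image_id]
        rw [hid] at this
        rw [this, perm_image_sdiff]
      obtain ⟨a, s, hr, himg, g, hg, hgs⟩ := ih (π⁻¹ q) hT'
      refine ⟨a, s, hr, himg, π * g, ?_, ?_⟩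
      · exact Subgroup.mul_mem _ (Subgroup.subset_closure ⟨b, hπa⟩) hg
      · show π (g s) = q
        rw [hgs]; simp
    · -- rank n - 1 letter
      have hsub : (univ : Finset Q) \ {q} ⊆ (univ : Finset Q).image (fun p => δ p b) := by
        rw [← h]
        exact Finset.image_subset_image (Finset.subset_univ T)
      have h1 : n - 1 ≤ rkl δ b := by
        have := Finset.card_le_card hsub
        rw [hcard_sdiff q] at this
        exact this
      have h2 : rkl δ b ≤ n := by
        have := Finset.card_image_le (f := fun p => δ p b) (s := (univ : Finset Q))
        rw [Finset.card_univ, hn] at this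
        exact this
      have hrb : rkl δ b = n - 1 :=
        le_antisymm (Nat.le_sub_one_of_lt (lt_of_le_of_ne h2 hb)) h1
      have heq : (univ : Finset Q) \ {q} = (univ : Finset Q).image (fun p => δ p b) := by
        apply Finset.eq_of_subset_of_card_le hsub
        rw [hcard_sdiff q]
        exact hrb.le
      exact ⟨b, q, hrb, heq.symm, 1, Subgroup.one_mem _, rfl⟩

theorem reachable_iff_orbits [Fintype Q] [DecidableEq Q] [Fintype A]
    (δ : Q → A → Q) (n m : ℕ)
    (hn : Fintype.card Q = n)
    (hm : (Finset.univ.filter (fun a : A => rkl δ a = n - 1)).card = m)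
    (hnm : m < n) :
    (∀ S : Finset Q, S.card = n - 1 → reach δ S) ↔
      ((∃ a : A, rkl δ a = n - 1) ∧
        ∀ q : Q, ∃ (a : A) (s : Q), rkl δ a = n - 1 ∧
          Finset.univ.image (fun p => δ p a) = Finset.univ \ {s} ∧
          ∃ g ∈ permGroup δ, g s = q) := by
  have hn1 : 1 ≤ n := Nat.one_le_of_lt (Nat.lt_of_le_of_lt (Nat.zero_le m) hnm)
  have hQne : Nonempty Q := by
    rw [← Fintype.card_pos_iff, hn]; omega
  have hcard_sdiff : ∀ x : Q, ((univ : Finset Q) \ {x}).card = n - 1 := by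
    intro x
    rw [Finset.card_sdiff_of_subset (by simp), Finset.card_univ, hn, Finset.card_singleton]
  constructor
  · intro hL
    have hmain : ∀ q : Q, ∃ (a : A) (s : Q), rkl δ a = n - 1 ∧
        Finset.univ.image (fun p => δ p a) = Finset.univ \ {s} ∧
        ∃ g ∈ permGroup δ, g s = q := by
      intro q
      obtain ⟨w, hw⟩ := hL (univ \ {q}) (hcard_sdiff q)
      exact key_lemma δ n hn w q hw
    obtain ⟨a, s, hr, _⟩ := hmain (Classical.arbitrary Q)
    exact ⟨⟨a, hr⟩, hmain⟩
  · rintro ⟨-, hq⟩ S hS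
    have hcS : ((univ : Finset Q) \ S).card = 1 := by
      rw [Finset.card_sdiff_of_subset (Finset.subset_univ S), Finset.card_univ, hn, hS]
      omega
    obtain ⟨q, hqS⟩ := Finset.card_eq_one.mp hcS
    have hSq : S = univ \ {q} := by
      rw [← hqS, Finset.sdiff_sdiff_self_left, Finset.univ_inter]
    obtain ⟨a, s, hr, himg, g, hg, hgs⟩ := hq q
    obtain ⟨wg, hwg⟩ := realize δ g hg
    refine ⟨a :: wg, ?_⟩
    have h1 : (univ : Finset Q).image (fun p => dw δ p (a :: wg))
        = ((univ : Finset Q).image (fun p => δ p a)).image (fun p => dw δ p wg) := by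
      rw [Finset.image_image]
      rfl
    rw [h1, himg]
    have h2 : ((univ : Finset Q) \ {s}).image (fun p => dw δ p wg)
        = ((univ : Finset Q) \ {s}).image g :=
      Finset.image_congr fun p _ => hwg p
    rw [h2, perm_image_sdiff, hgs, hSq]
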